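/- (Sewing lemma with controls.) Let d ∈ ℕ and ε > 0. There exists a constant C = C(ε) > 0 such that the following holds for all 0 ≤ S ≤ T. Let A : Δ_{[S,T]} → ℝ^d, and let w be a control on Δ_{[S,T]} such that |δA_{s,u,t}| ≤ w(s,t)^{1+ε} for every (s,t) ∈ Δ_{[S,T]} and every u ∈ [s,t]. Suppose there exists a function 𝒜 : [S,T] → ℝ^d such that for every t ∈ [S,T] and every sequence of partitions Π_N = {S = t_0^N, …, t_{k(N)}^N = t} of [S,t] with mesh |Π_N| → 0, one has ∑_{i=0}^{k(N)−1} A_{t_i^N, t_{i+1}^N} → 𝒜_t − 𝒜_S as N → ∞. Then for every (s,t) ∈ Δ_{[S,T]} one has |𝒜_t − 𝒜_s| ≤ |A_{s,t}| + C · w(s,t)^{1+ε}. -/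

import Mathlib

open Filter Topology

open Classical in
noncomputable def midpt (v : ℝ → ℝ → ℝ) (a b : ℝ) : ℝ :=
  if h : ∃ u, a ≤ u ∧ u ≤ b ∧ v a u ≤ v a b / 2 ∧ v u b ≤ v a b / 2 then h.choose else a

noncomputable def part (v : ℝ → ℝ → ℝ) (s t : ℝ) : ℕ → ℕ → ℝ
  | 0 => fun i => if i = 0 then s else t
  | n + 1 => fun i =>
      if i % 2 = 0 then part v s t n (i / 2)
      else midpt v (part v s t n (i / 2)) (part v s t n (i / 2 + 1))

lemma exists_mid {v : ℝ → ℝ → ℝ} {s t a b : ℝ} (hsa : s ≤ a) (hab : a ≤ b) (hbt : b ≤ t)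
    (h0 : ∀ u, s ≤ u → u ≤ t → v u u = 0)
    (hnn : ∀ x y, s ≤ x → x ≤ y → y ≤ t → 0 ≤ v x y)
    (hsuper : ∀ x u y, s ≤ x → x ≤ u → u ≤ y → y ≤ t → v x u + v u y ≤ v x y)
    (hcont : ContinuousOn (fun p : ℝ × ℝ => v p.1 p.2)
      {p : ℝ × ℝ | s ≤ p.1 ∧ p.1 ≤ p.2 ∧ p.2 ≤ t}) :
    ∃ u, a ≤ u ∧ u ≤ b ∧ v a u ≤ v a b / 2 ∧ v u b ≤ v a b / 2 := by
  have c1 : ContinuousOn (fun u => v a u) (Set.Icc a b) := by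
    apply hcont.comp ((continuous_const.prodMk continuous_id).continuousOn)
    intro u hu
    exact ⟨hsa, hu.1, le_trans hu.2 hbt⟩
  have c2 : ContinuousOn (fun u => v u b) (Set.Icc a b) := by
    apply hcont.comp ((continuous_id.prodMk continuous_const).continuousOn)
    intro u hu
    exact ⟨le_trans hsa hu.1, hu.2, hbt⟩
  have hg : ContinuousOn (fun u => v a u - v u b) (Set.Icc a b) := c1.sub c2
  have hnnab : 0 ≤ v a b := hnn a b hsa hab hbt
  have hmem : (0:ℝ) ∈ Set.Icc (v a a - v a b) (v a b - v b b) := by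
    rw [h0 a hsa (le_trans hab hbt), h0 b (le_trans hsa hab) hbt]
    constructor <;> linarith
  obtain ⟨u, hu, hgu⟩ := intermediate_value_Icc hab hg hmem
  refine ⟨u, hu.1, hu.2, ?_, ?_⟩
  · have := hsuper a u b hsa hu.1 hu.2 hbt
    have heq : v a u - v u b = 0 := hgu
    linarith
  · have := hsuper a u b hsa hu.1 hu.2 hbt
    have heq : v a u - v u b = 0 := hgu
    linarith
lemma midpt_spec {v : ℝ → ℝ → ℝ} {s t a b : ℝ} (hsa : s ≤ a) (hab : a ≤ b) (hbt : b ≤ t)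
    (h0 : ∀ u, s ≤ u → u ≤ t → v u u = 0)
    (hnn : ∀ x y, s ≤ x → x ≤ y → y ≤ t → 0 ≤ v x y)
    (hsuper : ∀ x u y, s ≤ x → x ≤ u → u ≤ y → y ≤ t → v x u + v u y ≤ v x y)
    (hcont : ContinuousOn (fun p : ℝ × ℝ => v p.1 p.2)
      {p : ℝ × ℝ | s ≤ p.1 ∧ p.1 ≤ p.2 ∧ p.2 ≤ t}) :
    a ≤ midpt v a b ∧ midpt v a b ≤ b ∧ v a (midpt v a b) ≤ v a b / 2 ∧
      v (midpt v a b) b ≤ v a b / 2 := by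
  have h := exists_mid hsa hab hbt h0 hnn hsuper hcont
  rw [midpt, dif_pos h]
  exact h.choose_spec

lemma part_props {v : ℝ → ℝ → ℝ} {s t : ℝ} (hst : s ≤ t)
    (h0 : ∀ u, s ≤ u → u ≤ t → v u u = 0)
    (hnn : ∀ x y, s ≤ x → x ≤ y → y ≤ t → 0 ≤ v x y)
    (hsuper : ∀ x u y, s ≤ x → x ≤ u → u ≤ y → y ≤ t → v x u + v u y ≤ v x y)
    (hcont : ContinuousOn (fun p : ℝ × ℝ => v p.1 p.2)
      {p : ℝ × ℝ | s ≤ p.1 ∧ p.1 ≤ p.2 ∧ p.2 ≤ t}) :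
    ∀ n, (part v s t n 0 = s) ∧ (∀ i, 2 ^ n ≤ i → part v s t n i = t) ∧
      (∀ i, part v s t n i ≤ part v s t n (i + 1)) ∧
      (∀ i, s ≤ part v s t n i ∧ part v s t n i ≤ t) ∧
      (∀ i, v (part v s t n i) (part v s t n (i + 1)) ≤ v s t / 2 ^ n) := by
  intro n
  induction n with
  | zero =>
    have p0 : ∀ i, part v s t 0 i = if i = 0 then s else t := fun i => rfl
    refine ⟨rfl, ?_, ?_, ?_, ?_⟩
    · intro i hi
      have h1 : i ≠ 0 := by omega
      rw [p0, if_neg h1]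
    · intro i
      rcases Nat.eq_zero_or_pos i with h | h
      · subst h; rw [p0, p0]; simpa using hst
      · have h1 : i ≠ 0 := by omega
        have h2 : i + 1 ≠ 0 := by omega
        rw [p0, p0, if_neg h1, if_neg h2]
    · intro i
      rcases Nat.eq_zero_or_pos i with h | h
      · subst h; rw [p0]; simp; exact hst
      · have h1 : i ≠ 0 := by omega
        rw [p0, if_neg h1]; exact ⟨hst, le_refl t⟩
    · intro i
      rcases Nat.eq_zero_or_pos i with h | h
      · subst h
        have h2 : (1:ℕ) ≠ 0 := by omega
        rw [p0, p0, if_pos rfl, if_neg h2]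
        simp
      · have h1 : i ≠ 0 := by omega
        have h2 : i + 1 ≠ 0 := by omega
        rw [p0, p0, if_neg h1, if_neg h2, h0 t hst le_rfl]
        have := hnn s t le_rfl hst le_rfl
        positivity
  | succ n ih =>
    obtain ⟨ih0, iht, ihmono, ihmem, ihv⟩ := ih
    -- abbreviation for midpt spec at level n intervals
    have key : ∀ j, part v s t n j ≤ midpt v (part v s t n j) (part v s t n (j+1)) ∧
        midpt v (part v s t n j) (part v s t n (j+1)) ≤ part v s t n (j+1) ∧
        v (part v s t n j) (midpt v (part v s t n j) (part v s t n (j+1))) ≤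
          v (part v s t n j) (part v s t n (j+1)) / 2 ∧
        v (midpt v (part v s t n j) (part v s t n (j+1))) (part v s t n (j+1)) ≤
          v (part v s t n j) (part v s t n (j+1)) / 2 := by
      intro j
      exact midpt_spec (ihmem j).1 (ihmono j) (ihmem (j+1)).2 h0 hnn hsuper hcont
    have heven : ∀ j, part v s t (n+1) (2*j) = part v s t n j := by
      intro j
      have : (2*j) % 2 = 0 := by omega
      simp [part, this, Nat.mul_div_cancel_left j (by norm_num : 0 < 2)]
    have hodd : ∀ j, part v s t (n+1) (2*j+1) =
        midpt v (part v s t n j) (part v s t n (j+1)) := by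
      intro j
      have h1 : (2*j+1) % 2 = 1 := by omega
      have h2 : (2*j+1) / 2 = j := by omega
      simp [part, h1, h2]
    refine ⟨?_, ?_, ?_, ?_, ?_⟩
    · have := heven 0; simpa [ih0] using this
    · intro i hi
      rcases Nat.even_or_odd i with ⟨j, hj⟩ | ⟨j, hj⟩
      · subst hj
        rw [show j + j = 2 * j by ring, heven]
        exact iht j (by omega)
      · subst hj
        have hjt : part v s t n j = t := iht j (by omega)
        have hjt' : part v s t n (j+1) = t := iht (j+1) (by omega)
        have h := key j
        rw [hodd]
        rw [hjt, hjt'] at h ⊢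
        exact le_antisymm h.2.1 h.1
    · intro i
      rcases Nat.even_or_odd i with ⟨j, hj⟩ | ⟨j, hj⟩
      · subst hj
        rw [show j + j = 2 * j by ring, heven, show 2*j+1 = 2*j+1 from rfl, hodd]
        exact (key j).1
      · subst hj
        rw [show 2*j+1 = 2*j+1 from rfl, hodd, show 2*j+1+1 = 2*(j+1) by ring, heven]
        exact (key j).2.1
    · intro i
      rcases Nat.even_or_odd i with ⟨j, hj⟩ | ⟨j, hj⟩
      · subst hj
        rw [show j + j = 2 * j by ring, heven]
        exact ihmem j
      · subst hj
        rw [hodd]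
        exact ⟨le_trans (ihmem j).1 (key j).1, le_trans (key j).2.1 (ihmem (j+1)).2⟩
    · intro i
      have h2n : (0:ℝ) < 2 ^ n := by positivity
      rcases Nat.even_or_odd i with ⟨j, hj⟩ | ⟨j, hj⟩
      · subst hj
        rw [show j + j = 2 * j by ring, heven, show 2*j+1 = 2*j+1 from rfl, hodd]
        refine le_trans (key j).2.2.1 ?_
        have := ihv j
        rw [pow_succ, ← div_div]
        linarith
      · subst hj
        rw [hodd, show 2*j+1+1 = 2*(j+1) by ring, heven]
        refine le_trans (key j).2.2.2 ?_
        have := ihv j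
        rw [pow_succ, ← div_div]
        linarith
lemma sum_range_two_mul {E : Type*} [AddCommMonoid E] (f : ℕ → E) (k : ℕ) :
    ∑ i ∈ Finset.range (2 * k), f i = ∑ j ∈ Finset.range k, (f (2 * j) + f (2 * j + 1)) := by
  induction k with
  | zero => simp
  | succ k ih =>
    rw [Finset.sum_range_succ, ← ih, show 2 * (k + 1) = (2 * k + 1) + 1 by ring,
      Finset.sum_range_succ, Finset.sum_range_succ]
    abel

lemma rpow_calc {ε : ℝ} (hε : 0 < ε) (n : ℕ) {V : ℝ} (hV : 0 ≤ V) :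
    (2 ^ n : ℝ) * (V / 2 ^ n) ^ (1 + ε) = ((2 : ℝ) ^ (-ε)) ^ n * V ^ (1 + ε) := by
  have h2n : (0:ℝ) < 2 ^ n := by positivity
  rw [Real.div_rpow hV h2n.le]
  rw [show ((2:ℝ) ^ n) = (2:ℝ) ^ (n : ℝ) by rw [Real.rpow_natCast],
    show ((2:ℝ) ^ (-ε)) ^ n = ((2:ℝ) ^ (-ε)) ^ (n : ℝ) by rw [Real.rpow_natCast],
    ← Real.rpow_mul (by norm_num : (0:ℝ) ≤ 2),
    ← Real.rpow_mul (by norm_num : (0:ℝ) ≤ 2)]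
  have key : (2:ℝ) ^ ((n:ℝ)) / (2:ℝ) ^ ((n:ℝ) * (1 + ε)) = (2:ℝ) ^ (-ε * (n:ℝ)) := by
    rw [← Real.rpow_sub (by norm_num : (0:ℝ) < 2)]
    congr 1
    ring
  have expand : (2:ℝ) ^ ((n:ℝ)) * (V ^ (1 + ε) / 2 ^ ((n:ℝ) * (1 + ε)))
      = ((2:ℝ) ^ ((n:ℝ)) / 2 ^ ((n:ℝ) * (1 + ε))) * V ^ (1 + ε) := by
    ring
  rw [expand, key]

lemma geom_bound {r : ℝ} (hr0 : 0 ≤ r) (hr1 : r < 1) (n : ℕ) :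
    ∑ m ∈ Finset.range n, r ^ m ≤ (1 - r)⁻¹ := by
  have hne : r ≠ 1 := ne_of_lt hr1
  have h1 : 0 < 1 - r := by linarith
  rw [geom_sum_eq hne]
  have heq : (r ^ n - 1) / (r - 1) = (1 - r ^ n) / (1 - r) := by
    rw [← neg_div_neg_eq]
    ring_nf
  rw [heq, ← one_div]
  exact div_le_div₀ zero_le_one (by linarith [pow_nonneg hr0 n]) h1 le_rfl
lemma part_even (v : ℝ → ℝ → ℝ) (s t : ℝ) (n j : ℕ) :
    part v s t (n + 1) (2 * j) = part v s t n j := by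
  have h1 : (2 * j) % 2 = 0 := by omega
  have h2 : (2 * j) / 2 = j := by omega
  simp [part, h1, h2]

lemma part_odd (v : ℝ → ℝ → ℝ) (s t : ℝ) (n j : ℕ) :
    part v s t (n + 1) (2 * j + 1) =
      midpt v (part v s t n j) (part v s t n (j + 1)) := by
  have h1 : (2 * j + 1) % 2 = 1 := by omega
  have h2 : (2 * j + 1) / 2 = j := by omega
  simp [part, h1, h2]

lemma part_sum_est {d : ℕ} {ε : ℝ} (hε : 0 < ε) {v : ℝ → ℝ → ℝ}
    {A : ℝ → ℝ → EuclideanSpace ℝ (Fin d)} {s t : ℝ} (hst : s ≤ t)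
    (h0 : ∀ u, s ≤ u → u ≤ t → v u u = 0)
    (hnn : ∀ x y, s ≤ x → x ≤ y → y ≤ t → 0 ≤ v x y)
    (hsuper : ∀ x u y, s ≤ x → x ≤ u → u ≤ y → y ≤ t → v x u + v u y ≤ v x y)
    (hcont : ContinuousOn (fun p : ℝ × ℝ => v p.1 p.2)
      {p : ℝ × ℝ | s ≤ p.1 ∧ p.1 ≤ p.2 ∧ p.2 ≤ t})
    (hA : ∀ a u b, s ≤ a → a ≤ u → u ≤ b → b ≤ t →
      ‖A a b - A a u - A u b‖ ≤ v a b ^ (1 + ε)) :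
    ∀ n, ‖(∑ i ∈ Finset.range (2 ^ n), A (part v s t n i) (part v s t n (i + 1))) - A s t‖
      ≤ (1 - (2:ℝ) ^ (-ε))⁻¹ * v s t ^ (1 + ε) := by
  set r : ℝ := (2:ℝ) ^ (-ε) with hr
  have hr0 : 0 ≤ r := (Real.rpow_pos_of_pos (by norm_num) _).le
  have hr1 : r < 1 := Real.rpow_lt_one_of_one_lt_of_neg one_lt_two (by linarith)
  have hVnn : 0 ≤ v s t := hnn s t le_rfl hst le_rfl
  have props := part_props hst h0 hnn hsuper hcont
  -- level-difference bound
  have step : ∀ n,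
      ‖(∑ i ∈ Finset.range (2 ^ (n + 1)), A (part v s t (n+1) i) (part v s t (n+1) (i + 1)))
        - (∑ i ∈ Finset.range (2 ^ n), A (part v s t n i) (part v s t n (i + 1)))‖
      ≤ r ^ n * v s t ^ (1 + ε) := by
    intro n
    obtain ⟨p0, pt, pmono, pmem, pv⟩ := props n
    have hsplit : (∑ i ∈ Finset.range (2 ^ (n + 1)),
        A (part v s t (n+1) i) (part v s t (n+1) (i + 1)))
        = ∑ j ∈ Finset.range (2 ^ n),
          (A (part v s t n j) (midpt v (part v s t n j) (part v s t n (j+1)))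
           + A (midpt v (part v s t n j) (part v s t n (j+1))) (part v s t n (j+1))) := by
      rw [show 2 ^ (n+1) = 2 * 2 ^ n by ring, sum_range_two_mul]
      refine Finset.sum_congr rfl fun j _ => ?_
      rw [show 2*j+1+1 = 2*(j+1) by ring, part_even, part_odd, part_even]
    rw [hsplit, ← Finset.sum_sub_distrib]
    refine le_trans (norm_sum_le _ _) ?_
    have hbound : ∀ j ∈ Finset.range (2 ^ n),
        ‖A (part v s t n j) (midpt v (part v s t n j) (part v s t n (j+1)))
          + A (midpt v (part v s t n j) (part v s t n (j+1))) (part v s t n (j+1))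
          - A (part v s t n j) (part v s t n (j+1))‖
        ≤ (v s t / 2 ^ n) ^ (1 + ε) := by
      intro j _
      set a := part v s t n j
      set b := part v s t n (j+1)
      have hm := midpt_spec (pmem j).1 (pmono j) (pmem (j+1)).2 h0 hnn hsuper hcont
      set m := midpt v a b
      have h1 : ‖A a m + A m b - A a b‖ = ‖A a b - A a m - A m b‖ := by
        rw [← norm_neg]; congr 1; abel
      rw [h1]
      refine le_trans (hA a m b (pmem j).1 hm.1 hm.2.1 (pmem (j+1)).2) ?_
      refine Real.rpow_le_rpow (hnn a b (pmem j).1 (pmono j) (pmem (j+1)).2) (pv j)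
        (by linarith)
    refine le_trans (Finset.sum_le_sum hbound) ?_
    rw [Finset.sum_const, Finset.card_range, nsmul_eq_mul]
    rw [show (((2:ℕ) ^ n : ℕ) : ℝ) = (2:ℝ) ^ n by push_cast; ring]
    rw [rpow_calc hε n hVnn]
  -- cumulative bound by induction
  have cum : ∀ n,
      ‖(∑ i ∈ Finset.range (2 ^ n), A (part v s t n i) (part v s t n (i + 1))) - A s t‖
      ≤ (∑ m ∈ Finset.range n, r ^ m) * v s t ^ (1 + ε) := by
    intro n
    induction n with
    | zero =>
      have : (∑ i ∈ Finset.range (2 ^ 0), A (part v s t 0 i) (part v s t 0 (i + 1)))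
          = A s t := by
        rw [pow_zero, Finset.sum_range_one]
        rfl
      rw [this, sub_self, norm_zero]
      simp
    | succ n ih =>
      have tri := norm_sub_le_norm_sub_add_norm_sub
        (∑ i ∈ Finset.range (2 ^ (n+1)), A (part v s t (n+1) i) (part v s t (n+1) (i + 1)))
        (∑ i ∈ Finset.range (2 ^ n), A (part v s t n i) (part v s t n (i + 1)))
        (A s t)
      refine le_trans tri ?_
      rw [Finset.sum_range_succ, add_mul]
      have := step n
      rw [add_comm ((∑ m ∈ Finset.range n, r ^ m) * v s t ^ (1 + ε))]
      exact add_le_add this ih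
  intro n
  refine le_trans (cum n) ?_
  exact mul_le_mul_of_nonneg_right (geom_bound hr0 hr1 n) (Real.rpow_nonneg hVnn _)
lemma sewing_core {d : ℕ} {ε : ℝ} (hε : 0 < ε) (S T : ℝ) (hST : S ≤ T)
    (A : ℝ → ℝ → EuclideanSpace ℝ (Fin d)) (w : ℝ → ℝ → ℝ)
    (𝒜 : ℝ → EuclideanSpace ℝ (Fin d))
    (hwc : ContinuousOn (fun p : ℝ × ℝ => w p.1 p.2)
      {p : ℝ × ℝ | S ≤ p.1 ∧ p.1 ≤ p.2 ∧ p.2 ≤ T})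
    (hwnn : ∀ s t, S ≤ s → s ≤ t → t ≤ T → 0 ≤ w s t)
    (hw0 : ∀ s, S ≤ s → s ≤ T → w s s = 0)
    (hwsuper : ∀ s u t, S ≤ s → s ≤ u → u ≤ t → t ≤ T → w s u + w u t ≤ w s t)
    (hδ : ∀ s u t, S ≤ s → s ≤ u → u ≤ t → t ≤ T →
      ‖A s t - A s u - A u t‖ ≤ w s t ^ (1 + ε))
    (hconv : ∀ t, S ≤ t → t ≤ T →
      ∀ (k : ℕ → ℕ) (π : ℕ → ℕ → ℝ),
        (∀ N, π N 0 = S) → (∀ N, π N (k N) = t) →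
        (∀ N i, i < k N → π N i ≤ π N (i + 1)) →
        (∀ δ : ℝ, 0 < δ → ∃ N₀, ∀ N ≥ N₀, ∀ i < k N, π N (i + 1) - π N i ≤ δ) →
        Tendsto (fun N => ∑ i ∈ Finset.range (k N), A (π N i) (π N (i + 1)))
          atTop (𝓝 (𝒜 t - 𝒜 S)))
    (s t : ℝ) (hSs : S ≤ s) (hst : s ≤ t) (htT : t ≤ T) (K : ℝ) (hK : 0 < K) :
    ‖𝒜 t - 𝒜 s - A s t‖ ≤ (1 - (2:ℝ) ^ (-ε))⁻¹ * (w s t + K * (t - s)) ^ (1 + ε) := by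
  have hSt : S ≤ t := le_trans hSs hst
  have hsT : s ≤ T := le_trans hst htT
  set v : ℝ → ℝ → ℝ := fun a b => w a b + K * (b - a) with hv
  -- control properties of v on [s,t]
  have h0v : ∀ u, s ≤ u → u ≤ t → v u u = 0 := by
    intro u h1 h2
    simp [hv, hw0 u (le_trans hSs h1) (le_trans h2 htT)]
  have hnnv : ∀ x y, s ≤ x → x ≤ y → y ≤ t → 0 ≤ v x y := by
    intro x y h1 h2 h3
    have := hwnn x y (le_trans hSs h1) h2 (le_trans h3 htT)
    have : 0 ≤ K * (y - x) := mul_nonneg hK.le (by linarith)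
    simp only [hv]
    nlinarith [hwnn x y (le_trans hSs h1) h2 (le_trans h3 htT)]
  have hsuperv : ∀ x u y, s ≤ x → x ≤ u → u ≤ y → y ≤ t → v x u + v u y ≤ v x y := by
    intro x u y h1 h2 h3 h4
    have := hwsuper x u y (le_trans hSs h1) h2 h3 (le_trans h4 htT)
    simp only [hv]
    linarith
  have hcontv : ContinuousOn (fun p : ℝ × ℝ => v p.1 p.2)
      {p : ℝ × ℝ | s ≤ p.1 ∧ p.1 ≤ p.2 ∧ p.2 ≤ t} := by
    have hsub : {p : ℝ × ℝ | s ≤ p.1 ∧ p.1 ≤ p.2 ∧ p.2 ≤ t} ⊆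
        {p : ℝ × ℝ | S ≤ p.1 ∧ p.1 ≤ p.2 ∧ p.2 ≤ T} := by
      intro p hp
      exact ⟨le_trans hSs hp.1, hp.2.1, le_trans hp.2.2 htT⟩
    have heqv : (fun p : ℝ × ℝ => v p.1 p.2)
        = fun p : ℝ × ℝ => w p.1 p.2 + K * (p.2 - p.1) := rfl
    rw [heqv]
    exact (hwc.mono hsub).add
      (Continuous.continuousOn (continuous_const.mul (continuous_snd.sub continuous_fst)))
  have hAv : ∀ a u b, s ≤ a → a ≤ u → u ≤ b → b ≤ t →
      ‖A a b - A a u - A u b‖ ≤ v a b ^ (1 + ε) := by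
    intro a u b h1 h2 h3 h4
    refine le_trans (hδ a u b (le_trans hSs h1) h2 h3 (le_trans h4 htT)) ?_
    refine Real.rpow_le_rpow (hwnn a b (le_trans hSs h1) (le_trans h2 h3) (le_trans h4 htT))
      ?_ (by linarith)
    have : 0 ≤ K * (b - a) := mul_nonneg hK.le (by linarith)
    simp only [hv]
    linarith
  have props := part_props hst h0v hnnv hsuperv hcontv
  have est := part_sum_est hε hst h0v hnnv hsuperv hcontv hAv
  -- the partitions of [S, t]
  set k : ℕ → ℕ := fun N => (N + 1) + 2 ^ N with hk
  set π : ℕ → ℕ → ℝ := fun N i =>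
    if i ≤ N + 1 then S + i * (s - S) / (N + 1) else part v s t N (i - (N + 1)) with hπ
  have huv : ∀ N i, i ≤ N + 1 → π N i = S + i * (s - S) / (N + 1) := by
    intro N i hi
    simp only [hπ, if_pos hi]
  have hjunction : ∀ N : ℕ, S + ((N : ℝ) + 1) * (s - S) / ((N : ℝ) + 1) = s := by
    intro N
    have : ((N : ℝ) + 1) ≠ 0 := by positivity
    field_simp
    ring
  have hpval : ∀ N j, π N (N + 1 + j) = part v s t N j := by
    intro N j
    rcases Nat.eq_zero_or_pos j with h | h
    · subst h
      rw [show N + 1 + 0 = N + 1 by ring, huv N (N+1) le_rfl, (props N).1]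
      push_cast
      exact hjunction N
    · have hcond : ¬ (N + 1 + j ≤ N + 1) := by omega
      simp only [hπ, if_neg hcond]
      congr 1
      omega
  have hπ0 : ∀ N, π N 0 = S := by
    intro N
    rw [huv N 0 (by omega)]
    simp
  have hπtop : ∀ N, π N (k N) = t := by
    intro N
    rw [hk]
    simp only []
    rw [hpval N (2 ^ N)]
    exact (props N).2.1 (2 ^ N) le_rfl
  have hsS : 0 ≤ s - S := by linarith
  have humono : ∀ N : ℕ, ∀ i j : ℕ, i ≤ j →
      S + (i : ℝ) * (s - S) / (N + 1) ≤ S + (j : ℝ) * (s - S) / (N + 1) := by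
    intro N i j hij
    have hij' : (i : ℝ) ≤ j := by exact_mod_cast hij
    have hN : (0:ℝ) < (N:ℝ) + 1 := by positivity
    gcongr
  have hπmono : ∀ N i, i < k N → π N i ≤ π N (i + 1) := by
    intro N i _
    by_cases hi : i + 1 ≤ N + 1
    · rw [huv N i (by omega), huv N (i+1) hi]
      exact humono N i (i+1) (by omega)
    · have hji : N + 1 ≤ i := by omega
      obtain ⟨j, hj⟩ := Nat.exists_eq_add_of_le hji
      subst hj
      rw [show N + 1 + j + 1 = N + 1 + (j + 1) by ring, hpval, hpval]
      exact (props N).2.2.1 j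
  -- mesh estimates
  have hmeshu : ∀ N i : ℕ, i + 1 ≤ N + 1 → π N (i+1) - π N i = (s - S) / (N + 1) := by
    intro N i hi
    rw [huv N i (by omega), huv N (i+1) hi]
    have hN : ((N:ℝ) + 1) ≠ 0 := by positivity
    push_cast
    field_simp
    ring
  have hmeshp : ∀ N j : ℕ, part v s t N (j + 1) - part v s t N j ≤ v s t / 2 ^ N / K := by
    intro N j
    have h1 := (props N).2.2.2.2 j
    have h2 : K * (part v s t N (j+1) - part v s t N j) ≤ v (part v s t N j) (part v s t N (j+1)) := by
      have hw := hwnn (part v s t N j) (part v s t N (j+1))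
        (le_trans hSs ((props N).2.2.2.1 j).1) ((props N).2.2.1 j)
        (le_trans ((props N).2.2.2.1 (j+1)).2 htT)
      simp only [hv]
      linarith
    have h3 : K * (part v s t N (j+1) - part v s t N j) ≤ v s t / 2 ^ N := le_trans h2 h1
    have h4 : part v s t N (j+1) - part v s t N j
        = K * (part v s t N (j+1) - part v s t N j) / K := by
      field_simp
    rw [h4]
    gcongr
  have hmesh : ∀ δ : ℝ, 0 < δ → ∃ N₀, ∀ N ≥ N₀, ∀ i < k N, π N (i + 1) - π N i ≤ δ := by
    intro δ hδ'
    have t1 : Tendsto (fun N : ℕ => (s - S) / ((N:ℝ) + 1)) atTop (𝓝 0) := by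
      have := tendsto_one_div_add_atTop_nhds_zero_nat (𝕜 := ℝ)
      have h := this.const_mul (s - S)
      simpa [div_eq_mul_inv, mul_comm, one_div] using h
    have t2 : Tendsto (fun N : ℕ => v s t / 2 ^ N / K) atTop (𝓝 0) := by
      have hgeo : Tendsto (fun N : ℕ => ((1:ℝ)/2) ^ N) atTop (𝓝 0) :=
        tendsto_pow_atTop_nhds_zero_of_lt_one (by norm_num) (by norm_num)
      have h := (hgeo.const_mul (v s t / K))
      rw [mul_zero] at h
      have heq : (fun N : ℕ => v s t / K * ((1:ℝ)/2) ^ N)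
          = fun N : ℕ => v s t / 2 ^ N / K := by
        funext N
        rw [one_div, inv_pow, ← div_eq_mul_inv, div_right_comm]
      rwa [heq] at h
    have e1 : ∀ᶠ N : ℕ in atTop, (s - S) / ((N:ℝ) + 1) ≤ δ :=
      t1.eventually (eventually_le_nhds hδ')
    have e2 : ∀ᶠ N : ℕ in atTop, v s t / 2 ^ N / K ≤ δ :=
      t2.eventually (eventually_le_nhds hδ')
    obtain ⟨N₀, hN₀⟩ := (e1.and e2).exists_forall_of_atTop
    refine ⟨N₀, fun N hN i hik => ?_⟩
    obtain ⟨he1, he2⟩ := hN₀ N hN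
    by_cases hi : i + 1 ≤ N + 1
    · rw [hmeshu N i hi]; exact he1
    · have hji : N + 1 ≤ i := by omega
      obtain ⟨j, hj⟩ := Nat.exists_eq_add_of_le hji
      subst hj
      rw [show N + 1 + j + 1 = N + 1 + (j + 1) by ring, hpval, hpval]
      exact le_trans (hmeshp N j) he2
  have conv1 := hconv t hSt htT k π hπ0 hπtop hπmono hmesh
  -- the uniform partitions of [S, s]
  set π' : ℕ → ℕ → ℝ := fun N i =>
    if i ≤ N + 1 then S + i * (s - S) / (N + 1) else s with hπ'
  have huv' : ∀ N i, i ≤ N + 1 → π' N i = S + i * (s - S) / (N + 1) := by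
    intro N i hi
    simp only [hπ', if_pos hi]
  have conv2 : Tendsto (fun N => ∑ i ∈ Finset.range (N + 1), A (π' N i) (π' N (i + 1)))
      atTop (𝓝 (𝒜 s - 𝒜 S)) := by
    apply hconv s hSs hsT (fun N => N + 1) π'
    · intro N; rw [huv' N 0 (by omega)]; simp
    · intro N
      rw [huv' N (N+1) le_rfl]
      push_cast
      exact hjunction N
    · intro N i hi
      rw [huv' N i (by omega), huv' N (i+1) (by omega)]
      exact humono N i (i+1) (by omega)
    · intro δ hδ'
      have t1 : Tendsto (fun N : ℕ => (s - S) / ((N:ℝ) + 1)) atTop (𝓝 0) := by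
        have := tendsto_one_div_add_atTop_nhds_zero_nat (𝕜 := ℝ)
        have h := this.const_mul (s - S)
        simpa [div_eq_mul_inv, mul_comm, one_div] using h
      obtain ⟨N₀, hN₀⟩ := (t1.eventually (eventually_le_nhds hδ')).exists_forall_of_atTop
      refine ⟨N₀, fun N hN i hik => ?_⟩
      have hN' : ((N:ℝ) + 1) ≠ 0 := by positivity
      calc π' N (i+1) - π' N i = (s - S) / ((N:ℝ) + 1) := by
            rw [huv' N i (by omega), huv' N (i+1) (by omega)]
            push_cast
            field_simp
            ring
      _ ≤ δ := hN₀ N hN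
  -- sum decomposition
  have hdecomp : ∀ N, (∑ i ∈ Finset.range (k N), A (π N i) (π N (i + 1)))
      = (∑ i ∈ Finset.range (N + 1), A (π' N i) (π' N (i + 1)))
        + ∑ j ∈ Finset.range (2 ^ N), A (part v s t N j) (part v s t N (j + 1)) := by
    intro N
    rw [hk]
    rw [Finset.sum_range_add (fun i => A (π N i) (π N (i + 1))) (N + 1) (2 ^ N)]
    congr 1
    · refine Finset.sum_congr rfl fun i hi => ?_
      have hi' : i < N + 1 := Finset.mem_range.mp hi
      rw [huv N i (by omega), huv N (i+1) (by omega), huv' N i (by omega),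
        huv' N (i+1) (by omega)]
    · refine Finset.sum_congr rfl fun j _ => ?_
      rw [show N + 1 + j + 1 = N + 1 + (j + 1) by ring, hpval, hpval]
  have convp : Tendsto (fun N => ∑ j ∈ Finset.range (2 ^ N),
      A (part v s t N j) (part v s t N (j + 1))) atTop (𝓝 (𝒜 t - 𝒜 s)) := by
    have h := conv1.sub conv2
    have heq : (fun N => (∑ i ∈ Finset.range (k N), A (π N i) (π N (i + 1)))
        - ∑ i ∈ Finset.range (N + 1), A (π' N i) (π' N (i + 1)))
        = fun N => ∑ j ∈ Finset.range (2 ^ N), A (part v s t N j) (part v s t N (j + 1)) := by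
      funext N
      rw [hdecomp N]
      abel
    rw [heq] at h
    have : 𝒜 t - 𝒜 S - (𝒜 s - 𝒜 S) = 𝒜 t - 𝒜 s := by abel
    rwa [this] at h
  -- conclude
  have hlim : Tendsto (fun N => ‖(∑ j ∈ Finset.range (2 ^ N),
      A (part v s t N j) (part v s t N (j + 1))) - A s t‖) atTop
      (𝓝 ‖𝒜 t - 𝒜 s - A s t‖) :=
    ((convp.sub tendsto_const_nhds).norm)
  exact le_of_tendsto hlim (Filter.Eventually.of_forall est)
/-- **Sewing lemma with controls.** -/
theorem sewing_lemma_with_controls (d : ℕ) (ε : ℝ) (hε : 0 < ε) :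
    ∃ C : ℝ, 0 < C ∧
      ∀ (S T : ℝ), 0 ≤ S → S ≤ T →
      ∀ (A : ℝ → ℝ → EuclideanSpace ℝ (Fin d)) (w : ℝ → ℝ → ℝ)
        (𝒜 : ℝ → EuclideanSpace ℝ (Fin d)),
        -- `w` is a control on the simplex Δ_{[S,T]}
        ContinuousOn (fun p : ℝ × ℝ => w p.1 p.2)
          {p : ℝ × ℝ | S ≤ p.1 ∧ p.1 ≤ p.2 ∧ p.2 ≤ T} →
        (∀ s t, S ≤ s → s ≤ t → t ≤ T → 0 ≤ w s t) →
        (∀ s, S ≤ s → s ≤ T → w s s = 0) →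
        (∀ s u t, S ≤ s → s ≤ u → u ≤ t → t ≤ T → w s u + w u t ≤ w s t) →
        -- bound on δA_{s,u,t} = A_{s,t} - A_{s,u} - A_{u,t}
        (∀ s u t, S ≤ s → s ≤ u → u ≤ t → t ≤ T →
          ‖A s t - A s u - A u t‖ ≤ w s t ^ (1 + ε)) →
        -- Riemann sums along any sequence of partitions of [S,t] with vanishing mesh
        -- converge to 𝒜_t - 𝒜_S
        (∀ t, S ≤ t → t ≤ T →
          ∀ (k : ℕ → ℕ) (π : ℕ → ℕ → ℝ),
            (∀ N, π N 0 = S) → (∀ N, π N (k N) = t) →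
            (∀ N i, i < k N → π N i ≤ π N (i + 1)) →
            (∀ δ : ℝ, 0 < δ → ∃ N₀, ∀ N ≥ N₀, ∀ i < k N, π N (i + 1) - π N i ≤ δ) →
            Tendsto (fun N => ∑ i ∈ Finset.range (k N), A (π N i) (π N (i + 1)))
              atTop (𝓝 (𝒜 t - 𝒜 S))) →
        -- conclusion
        ∀ s t, S ≤ s → s ≤ t → t ≤ T →
          ‖𝒜 t - 𝒜 s‖ ≤ ‖A s t‖ + C * w s t ^ (1 + ε) := by
  set r : ℝ := (2:ℝ) ^ (-ε) with hr
  have hr0 : 0 ≤ r := (Real.rpow_pos_of_pos (by norm_num) _).le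
  have hr1 : r < 1 := Real.rpow_lt_one_of_one_lt_of_neg one_lt_two (by linarith)
  have h1r : 0 < 1 - r := by linarith
  refine ⟨(1 - r)⁻¹, by positivity, ?_⟩
  intro S T hS hST A w 𝒜 hwc hwnn hw0 hwsuper hδ hconv s t hSs hst htT
  have key : ∀ n : ℕ, ‖𝒜 t - 𝒜 s - A s t‖
      ≤ (1 - r)⁻¹ * (w s t + (1 / ((n:ℝ) + 1)) * (t - s)) ^ (1 + ε) := by
    intro n
    exact sewing_core hε S T hST A w 𝒜 hwc hwnn hw0 hwsuper hδ hconv s t hSs hst htT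
      (1 / ((n:ℝ) + 1)) (by positivity)
  have hwnn' : 0 ≤ w s t := hwnn s t hSs hst htT
  have hlim : Tendsto (fun n : ℕ =>
      (1 - r)⁻¹ * (w s t + (1 / ((n:ℝ) + 1)) * (t - s)) ^ (1 + ε)) atTop
      (𝓝 ((1 - r)⁻¹ * w s t ^ (1 + ε))) := by
    have hinner : Tendsto (fun n : ℕ => w s t + (1 / ((n:ℝ) + 1)) * (t - s)) atTop
        (𝓝 (w s t)) := by
      have h1 : Tendsto (fun n : ℕ => (1 / ((n:ℝ) + 1)) * (t - s)) atTop (𝓝 0) := by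
        simpa using tendsto_one_div_add_atTop_nhds_zero_nat.mul_const (t - s)
      simpa using (tendsto_const_nhds.add h1)
    have hcont : ContinuousAt (fun x : ℝ => x ^ (1 + ε)) (w s t) :=
      Real.continuousAt_rpow_const (w s t) (1 + ε) (Or.inr (by linarith))
    exact (hcont.tendsto.comp hinner).const_mul _
  have hmain : ‖𝒜 t - 𝒜 s - A s t‖ ≤ (1 - r)⁻¹ * w s t ^ (1 + ε) :=
    ge_of_tendsto hlim (Filter.Eventually.of_forall key)
  have hsplit : 𝒜 t - 𝒜 s = A s t + (𝒜 t - 𝒜 s - A s t) := by abel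
  calc ‖𝒜 t - 𝒜 s‖ = ‖A s t + (𝒜 t - 𝒜 s - A s t)‖ := by rw [← hsplit]
  _ ≤ ‖A s t‖ + ‖𝒜 t - 𝒜 s - A s t‖ := norm_add_le _ _
  _ ≤ ‖A s t‖ + (1 - r)⁻¹ * w s t ^ (1 + ε) := by linarith
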